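/- For every natural number n ≥ 1, every complex number a, and every complex number λ, the characteristic polynomial of the matrix a·J_n + B_n evaluated at λ satisfies det(λ·I_n − (a·J_n + B_n)) = ((a + i)(λ − i)^n − (a − i)(λ + i)^n)/(2i). -/

import Mathlib

open scoped Matrix

/-- `J n` is the `n × n` complex matrix all of whose entries equal `1`. -/
def J (n : ℕ) : Matrix (Fin n) (Fin n) ℂ := Matrix.of fun _ _ => 1

/-- `B n` is the `n × n` complex matrix with entries `i` above the diagonal,
`-i` below the diagonal and `0` on the diagonal. -/
def B (n : ℕ) : Matrix (Fin n) (Fin n) ℂ :=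
  Matrix.of fun j k => if j < k then Complex.I else if k < j then -Complex.I else 0


lemma key (n : ℕ) (a lam : ℂ) (hd0 : lam + Complex.I ≠ 0) :
    Matrix.det (lam • (1 : Matrix (Fin n) (Fin n) ℂ) - (a • J n + B n)) =
      ((a + Complex.I) * (lam - Complex.I) ^ n - (a - Complex.I) * (lam + Complex.I) ^ n) /
        (2 * Complex.I) := by
  have hI : (Complex.I : ℂ) ≠ 0 := Complex.I_ne_zero
  obtain ⟨d, hdd⟩ : ∃ d : ℂ, d = lam + Complex.I := ⟨_, rfl⟩
  have hd : d ≠ 0 := hdd ▸ hd0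
  obtain ⟨r, hr⟩ : ∃ r : ℂ, r = (lam - Complex.I) / d := ⟨_, rfl⟩
  have hrd : r * d = lam - Complex.I := by rw [hr]; field_simp
  have hrd1 : (r - 1) * d = -(2 * Complex.I) := by linear_combination hrd - hdd
  have hr1' : r - 1 ≠ 0 := by
    intro h
    apply hI
    linear_combination (1/2 : ℂ) * hrd - (1/2 : ℂ) * hdd - (d/2) * h
  have hr1 : r ≠ 1 := by intro h; exact hr1' (by rw [h]; ring)
  have hrdn : r ^ n * d ^ n = (lam - Complex.I) ^ n := by rw [← mul_pow, hrd]
  set T : Matrix (Fin n) (Fin n) ℂ :=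
    Matrix.of (fun j k : Fin n =>
      if (j : ℕ) = (k : ℕ) then d else if (k : ℕ) < (j : ℕ) then 2 * Complex.I else 0) with hT
  set x : Fin n → ℂ := fun k => r ^ (k : ℕ) / d with hx
  set u : Fin n → ℂ := fun _ => 1 with hu
  have hTx : T *ᵥ x = u := by
    funext j
    have hjn : (j : ℕ) < n := j.isLt
    set g : ℕ → ℂ := fun m =>
      (if (j : ℕ) = m then d else if m < (j : ℕ) then 2 * Complex.I else 0) * (r ^ m / d) with hg
    have h1 : (T *ᵥ x) j = ∑ k : Fin n, g (k : ℕ) := by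
      simp [Matrix.mulVec, dotProduct, hg, hT, hx]
    rw [h1, Fin.sum_univ_eq_sum_range g n]
    have h2 : ∑ m ∈ Finset.range n, g m = ∑ m ∈ Finset.range ((j : ℕ) + 1), g m := by
      refine (Finset.sum_subset (Finset.range_subset_range.2 hjn) ?_).symm
      intro m _ hm
      simp only [Finset.mem_range] at hm
      have h3 : (j : ℕ) ≠ m := by omega
      have h4 : ¬ m < (j : ℕ) := by omega
      simp [hg, h3, h4]
    rw [h2, Finset.sum_range_succ]
    have h5 : ∑ m ∈ Finset.range (j : ℕ), g m
        = (2 * Complex.I / d) * ((r ^ (j : ℕ) - 1) / (r - 1)) := by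
      rw [← geom_sum_eq hr1, Finset.mul_sum]
      refine Finset.sum_congr rfl ?_
      intro m hm
      simp only [Finset.mem_range] at hm
      have h3 : (j : ℕ) ≠ m := by omega
      simp only [hg, h3, if_false, hm, if_true]
      ring
    rw [h5]
    simp only [hg, if_pos rfl]
    show 2 * Complex.I / d * ((r ^ (j:ℕ) - 1) / (r - 1)) + d * (r ^ (j:ℕ) / d) = u j
    show _ = (1 : ℂ)
    field_simp
    linear_combination (r ^ (j : ℕ) - 1) * hrd1
  have hdet_T : T.det = d ^ n := by
    have hlow : T.BlockTriangular OrderDual.toDual := by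
      intro i k h
      have hik : i < k := h
      have h1 : (i : ℕ) ≠ (k : ℕ) := Fin.val_ne_of_ne hik.ne
      have h2 : ¬ (k : ℕ) < (i : ℕ) := not_lt.2 hik.le
      simp [hT, h1, h2]
      exact hik.le
    rw [Matrix.det_of_lowerTriangular T hlow]
    simp [hT]
  set y : Fin n → ℂ := (-(a + Complex.I)) • x with hy
  have hcol : T * Matrix.replicateCol Unit y = Matrix.replicateCol Unit fun _ => -(a + Complex.I) := by
    rw [← Matrix.replicateCol_mulVec, Matrix.mulVec_smul, hTx]
    ext i j
    simp [hu]
  have hA : lam • (1 : Matrix (Fin n) (Fin n) ℂ) - (a • J n + B n)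
      = T * (1 + Matrix.replicateCol Unit y * Matrix.replicateRow Unit u) := by
    rw [Matrix.mul_add, Matrix.mul_one, ← Matrix.mul_assoc, hcol]
    ext i k
    rcases lt_trichotomy i k with h | h | h
    · have h1 : (i : ℕ) ≠ (k : ℕ) := Fin.val_ne_of_ne h.ne
      have h2 : ¬ (k : ℕ) < (i : ℕ) := not_lt.2 h.le
      have h3 : ¬ k < i := not_lt.2 h.le
      simp [hT, J, B, Matrix.one_apply, h.ne, h, h1, h2, h3, Matrix.mul_apply, hu]
      try ring
    · subst h
      simp [hT, J, B, Matrix.one_apply, Matrix.mul_apply, hu]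
      linear_combination -hdd
    · have h1 : (i : ℕ) ≠ (k : ℕ) := Fin.val_ne_of_ne h.ne'
      have h2 : (k : ℕ) < (i : ℕ) := h
      simp [hT, J, B, Matrix.one_apply, h.ne', h, not_lt.2 h.le, h1, h2, Matrix.mul_apply, hu]
      ring
  rw [hA, Matrix.det_mul, hdet_T, Matrix.det_one_add_replicateCol_mul_replicateRow]
  have hsum : u ⬝ᵥ y = -(a + Complex.I) * ((1 / d) * ((r ^ n - 1) / (r - 1))) := by
    have h1 : u ⬝ᵥ y = -(a + Complex.I) * ∑ k : Fin n, x k := by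
      simp only [dotProduct, hu, hy, Pi.smul_apply, smul_eq_mul, one_mul,
        ← Finset.mul_sum]
    have h2 : ∑ k : Fin n, x k = (1 / d) * ((r ^ n - 1) / (r - 1)) := by
      calc ∑ k : Fin n, x k = ∑ m ∈ Finset.range n, r ^ m / d :=
            Fin.sum_univ_eq_sum_range (fun m => r ^ m / d) n
        _ = (∑ m ∈ Finset.range n, r ^ m) / d := by rw [← Finset.sum_div]
        _ = (1 / d) * ((r ^ n - 1) / (r - 1)) := by rw [geom_sum_eq hr1]; ring
    rw [h1, h2]
  rw [hsum, ← hdd]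
  have h2I : (2 : ℂ) * Complex.I ≠ 0 := by
    exact mul_ne_zero two_ne_zero hI
  field_simp
  linear_combination (2 * Complex.I * d ^ n - (a + Complex.I) * (lam - Complex.I) ^ n +
      (a - Complex.I) * d ^ n) * hrd1 + (-(2 * Complex.I) * (a + Complex.I)) * hrdn

theorem stmt_0 (n : ℕ) (hn : 1 ≤ n) (a lam : ℂ) :
    Matrix.det (lam • (1 : Matrix (Fin n) (Fin n) ℂ) - (a • J n + B n)) =
      ((a + Complex.I) * (lam - Complex.I) ^ n - (a - Complex.I) * (lam + Complex.I) ^ n) /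
        (2 * Complex.I) := by
  have hf : Continuous fun l : ℂ =>
      Matrix.det (l • (1 : Matrix (Fin n) (Fin n) ℂ) - (a • J n + B n)) := by
    apply Continuous.matrix_det
    exact (continuous_id.smul continuous_const).sub continuous_const
  have hg : Continuous fun l : ℂ =>
      ((a + Complex.I) * (l - Complex.I) ^ n - (a - Complex.I) * (l + Complex.I) ^ n) /
        (2 * Complex.I) := by
    apply Continuous.div_const
    exact (continuous_const.mul ((continuous_id.sub continuous_const).pow n)).sub
      (continuous_const.mul ((continuous_id.add continuous_const).pow n))
  have heq : (fun l : ℂ =>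
      Matrix.det (l • (1 : Matrix (Fin n) (Fin n) ℂ) - (a • J n + B n))) = fun l : ℂ =>
      ((a + Complex.I) * (l - Complex.I) ^ n - (a - Complex.I) * (l + Complex.I) ^ n) /
        (2 * Complex.I) := by
    refine Continuous.ext_on (dense_compl_singleton (-Complex.I)) hf hg ?_
    intro l hl
    refine key n a l ?_
    intro h
    exact hl (by simpa [eq_neg_of_add_eq_zero_left h] )
  exact congrFun heq lam
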